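/- Let R be a commutative ring, n ≥ 1, and let A₁, …, A_n be 2×2 matrices over R. Let M be the 2n×2n block matrix whose (i,1) block is A_i for i = 1, …, n, whose (i, i+1) block is the 2×2 identity for i = 1, …, n-1, and all of whose other 2×2 blocks are zero. Then the characteristic polynomial of M satisfies det(X·I_{2n} - M) = det(Xⁿ·I₂ - Σ_{i=1}^{n} X^{n-i}·A_i), as an identity in R[X]. -/

import Mathlib

open Polynomial

open Matrix Kronecker in
private theorem key {S : Type*} [CommRing S] (m : ℕ) (x : S)
    (A : Fin (m+1) → Matrix (Fin 2) (Fin 2) S)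
    (N : Matrix (Fin (m+1) × Fin 2) (Fin (m+1) × Fin 2) S)
    (hN : ∀ p q : Fin (m+1) × Fin 2, N p q =
        x * (if p = q then 1 else 0) -
          (if (q.1 : ℕ) = 0 then A p.1 p.2 q.2
            else if (q.1 : ℕ) = (p.1 : ℕ) + 1 then (if p.2 = q.2 then (1:S) else 0) else 0)) :
    N.det = (x ^ (m+1) • (1 : Matrix (Fin 2) (Fin 2) S)
        - ∑ i : Fin (m+1), x ^ (m - (i:ℕ)) • A i).det := by
  classical
  set B : Matrix (Fin 2) (Fin 2) S :=
    x ^ (m+1) • (1 : Matrix (Fin 2) (Fin 2) S) - ∑ i : Fin (m+1), x ^ (m - (i:ℕ)) • A i with hBdef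
  have hB : ∀ a b : Fin 2, B a b
      = x ^ (m+1) * (if a = b then 1 else 0) - ∑ i : Fin (m+1), x ^ (m - (i:ℕ)) * A i a b := by
    intro a b
    simp [hBdef, Matrix.sub_apply, Matrix.smul_apply, Matrix.one_apply, Matrix.sum_apply,
      smul_eq_mul]
  -- the lower-triangular row-operation matrix
  set F : Matrix (Fin (m+1)) (Fin (m+1)) S :=
    Matrix.of (fun p q => if (p:ℕ) = m then x ^ (m - (q:ℕ)) else if p = q then 1 else 0) with hFdef
  have hFdet : F.det = 1 := by
    rw [Matrix.det_of_lowerTriangular F]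
    · apply Finset.prod_eq_one
      intro i _
      by_cases h : (i:ℕ) = m
      · simp [hFdef, h]
      · simp [hFdef, h]
    · intro i j hij
      have hij' : (i:ℕ) < (j:ℕ) := hij
      have h1 : ¬ ((i:ℕ) = m) := by have := j.isLt; omega
      have h2 : ¬ (i = j) := by
        intro h; rw [h] at hij'; omega
      simp [hFdef, h1, h2]
  set T : Matrix (Fin (m+1) × Fin 2) (Fin (m+1) × Fin 2) S :=
    Matrix.of (fun p q => if (p.1:ℕ) = m then (if (q.1:ℕ) = 0 then B p.2 q.2 else 0) else N p q)
    with hTdef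
  have hLN : (F ⊗ₖ (1 : Matrix (Fin 2) (Fin 2) S)) * N = T := by
    ext ⟨p, a⟩ ⟨q, b⟩
    rw [Matrix.mul_apply, Fintype.sum_prod_type]
    have hrow : ∀ r : Fin (m+1),
        ∑ c : Fin 2, (F ⊗ₖ (1 : Matrix (Fin 2) (Fin 2) S)) (p,a) (r,c) * N (r,c) (q,b)
          = F p r * N (r,a) (q,b) := by
      intro r
      simp [Matrix.kroneckerMap_apply, Matrix.one_apply, mul_ite, ite_mul, mul_assoc]
    rw [Finset.sum_congr rfl (fun r _ => hrow r)]
    by_cases hp : (p:ℕ) = m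
    · -- the combined row
      have hsum1 : ∑ r : Fin (m+1), x ^ (m - (r:ℕ)) * (x * (if (r,a) = (q,b) then (1:S) else 0))
          = if a = b then x ^ (m + 1 - (q:ℕ)) else 0 := by
        rw [Finset.sum_eq_single q]
        · by_cases hab : a = b
          · have : m - (q:ℕ) + 1 = m + 1 - (q:ℕ) := by have := q.isLt; omega
            simp [hab, ← pow_succ, this]
          · simp [hab, Prod.ext_iff]
        · intro r _ hr
          simp [Prod.ext_iff, hr]
        · simp
      by_cases hq : (q:ℕ) = 0
      · have : ∀ r : Fin (m+1), F p r * N (r,a) (q,b)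
            = x ^ (m - (r:ℕ)) * (x * (if (r,a) = (q,b) then (1:S) else 0))
              - x ^ (m - (r:ℕ)) * A r a b := by
          intro r
          rw [hN, hFdef]
          simp only [Matrix.of_apply]
          rw [if_pos hp, if_pos hq, mul_sub]
        rw [Finset.sum_congr rfl (fun r _ => this r), Finset.sum_sub_distrib, hsum1]
        simp [hTdef, hp, hq, hB a b, (Fin.ext hq : q = 0)]
      · -- q ≥ 1 : the row becomes zero
        have hq1 : (q:ℕ) - 1 < m + 1 := by have := q.isLt; omega
        have : ∀ r : Fin (m+1), F p r * N (r,a) (q,b)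
            = x ^ (m - (r:ℕ)) * (x * (if (r,a) = (q,b) then (1:S) else 0))
              - x ^ (m - (r:ℕ)) * (if (q:ℕ) = (r:ℕ) + 1 then (if a = b then (1:S) else 0) else 0) := by
          intro r
          rw [hN, hFdef]
          simp only [Matrix.of_apply]
          rw [if_pos hp, if_neg hq, mul_sub]
        rw [Finset.sum_congr rfl (fun r _ => this r), Finset.sum_sub_distrib, hsum1]
        have hsum2 : ∑ r : Fin (m+1),
            x ^ (m - (r:ℕ)) * (if (q:ℕ) = (r:ℕ) + 1 then (if a = b then (1:S) else 0) else 0)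
              = if a = b then x ^ (m + 1 - (q:ℕ)) else 0 := by
          rw [Finset.sum_eq_single (⟨(q:ℕ) - 1, hq1⟩ : Fin (m+1))]
          · have h1 : (q:ℕ) = ((⟨(q:ℕ) - 1, hq1⟩ : Fin (m+1)) : ℕ) + 1 := by
              simp; omega
            have h2 : m - ((⟨(q:ℕ) - 1, hq1⟩ : Fin (m+1)) : ℕ) = m + 1 - (q:ℕ) := by
              simp; have := q.isLt; omega
            rw [if_pos h1, h2]
            by_cases hab : a = b <;> simp [hab]
          · intro r _ hr
            have : ¬ ((q:ℕ) = (r:ℕ) + 1) := by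
              intro h
              apply hr
              apply Fin.ext
              simp; omega
            simp [this]
          · simp
        rw [hsum2]
        simp [hTdef, hp, hq]; intro h; exact absurd (congrArg Fin.val h) hq
    · -- an untouched row
      have : ∀ r : Fin (m+1), F p r * N (r,a) (q,b)
          = (if p = r then (1:S) else 0) * N (r,a) (q,b) := by
        intro r
        rw [hFdef]; simp [hp]
      rw [Finset.sum_congr rfl (fun r _ => this r)]
      simp [hTdef, hp, Finset.sum_ite_eq, ite_mul]
  have hTdet : T.det = N.det := by
    rw [← hLN, Matrix.det_mul, Matrix.det_kronecker, hFdet, Matrix.det_one, one_pow, one_pow,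
      one_mul, one_mul]
  -- cyclic shift of block columns
  set σ : Equiv.Perm (Fin (m+1) × Fin 2) :=
    Equiv.prodCongrLeft (fun _ : Fin 2 => (finRotate (m+1))) with hσdef
  have hσsign : Equiv.Perm.sign σ = 1 := by
    rw [hσdef, Equiv.Perm.sign_prodCongrLeft]
    rw [Finset.prod_const, Finset.card_univ, Fintype.card_fin, sign_finRotate,
      ← pow_mul, mul_comm, pow_mul]
    simp
  set T2 := T.submatrix id ⇑σ with hT2def
  have hT2det : T2.det = T.det := by
    rw [hT2def, Matrix.det_permute', hσsign]
    simp
  have hval : ∀ q : Fin (m+1), ((q + 1 : Fin (m+1)) : ℕ) = if (q:ℕ) = m then 0 else (q:ℕ)+1 := by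
    intro q
    rw [Fin.val_add_one]
    by_cases h : (q:ℕ) = m
    · rw [if_pos (Fin.ext (by simpa using h)), if_pos h]
    · rw [if_neg (fun hh => h (by simp [hh])), if_neg h]
  have hT2apply : ∀ (p q : Fin (m+1)) (a b : Fin 2), T2 (p,a) (q,b) = T (p,a) (q+1, b) := by
    intro p q a b
    rw [hT2def, Matrix.submatrix_apply, hσdef]
    simp [Equiv.prodCongrLeft_apply]
  -- split off the last block row/column
  set e : (Fin (m+1) × Fin 2) ≃ (Fin m × Fin 2) ⊕ Fin 2 :=
    { toFun := fun p => if h : (p.1:ℕ) < m then Sum.inl (⟨p.1, h⟩, p.2) else Sum.inr p.2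
      invFun := Sum.elim (fun q => (⟨(q.1:ℕ), by have := q.1.isLt; omega⟩, q.2))
        (fun a => (⟨m, by omega⟩, a))
      left_inv := by
        rintro ⟨p, a⟩
        by_cases h : (p:ℕ) < m
        · simp [h]
        · have : (p:ℕ) = m := by have := p.isLt; omega
          simp [h]
          exact Fin.ext (by simp [this])
      right_inv := by
        rintro (⟨q, a⟩ | a)
        · simp [q.isLt]
        · simp } with hedef
  set W := T2.submatrix ⇑e.symm ⇑e.symm with hWdef
  have hWdet : W.det = T2.det := Matrix.det_submatrix_equiv_self e.symm T2
  have hesymm1 : ∀ (q : Fin m) (b : Fin 2),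
      e.symm (Sum.inl (q, b)) = (⟨(q:ℕ), by have := q.isLt; omega⟩, b) := by
    intro q b; rw [hedef]; rfl
  have hesymm2 : ∀ b : Fin 2, e.symm (Sum.inr b) = (⟨m, by omega⟩, b) := by
    intro b; rw [hedef]; rfl
  set Em : Matrix (Fin m) (Fin m) S :=
    Matrix.of (fun p q => (if (p:ℕ) = (q:ℕ)+1 then x else 0) - (if p = q then (1:S) else 0))
    with hEmdef
  have hEmdet : Em.det = (-1) ^ m := by
    rw [Matrix.det_of_lowerTriangular Em]
    · have : ∀ i : Fin m, Em i i = -1 := by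
        intro i
        have : ¬ ((i:ℕ) = (i:ℕ) + 1) := by omega
        simp [hEmdef, this]
      rw [Finset.prod_congr rfl (fun i _ => this i)]
      simp
    · intro i j hij
      have hij' : (i:ℕ) < (j:ℕ) := hij
      have h1 : ¬ ((i:ℕ) = (j:ℕ) + 1) := by omega
      have h2 : ¬ (i = j) := by intro h; rw [h] at hij'; omega
      simp [hEmdef, h1, h2]
  have h21 : W.toBlocks₂₁ = 0 := by
    ext a ⟨q, b⟩
    rw [Matrix.toBlocks₂₁]
    simp only [Matrix.of_apply, hWdef, Matrix.submatrix_apply, hesymm1, hesymm2, hT2apply]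
    have hv : (((⟨(q:ℕ), by have := q.isLt; omega⟩ : Fin (m+1)) + 1 : Fin (m+1)) : ℕ) = (q:ℕ) + 1 := by
      rw [hval, if_neg q.isLt.ne]
    rw [hTdef]
    simp [hv]; intro h; have := congrArg Fin.val h; rw [hv] at this; simp at this
  have h22 : W.toBlocks₂₂ = B := by
    ext a b
    rw [Matrix.toBlocks₂₂]
    simp only [Matrix.of_apply, hWdef, Matrix.submatrix_apply, hesymm2, hT2apply]
    have hv : (((⟨m, by omega⟩ : Fin (m+1)) + 1 : Fin (m+1)) : ℕ) = 0 := by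
      rw [hval, if_pos rfl]
    rw [hTdef]
    simp [hv]; intro h; exact absurd (Fin.ext hv) h
  have h11 : W.toBlocks₁₁ = Em ⊗ₖ (1 : Matrix (Fin 2) (Fin 2) S) := by
    ext ⟨p, a⟩ ⟨q, b⟩
    rw [Matrix.toBlocks₁₁]
    simp only [Matrix.of_apply, hWdef, Matrix.submatrix_apply, hesymm1, hT2apply]
    have hv : (((⟨(q:ℕ), by have := q.isLt; omega⟩ : Fin (m+1)) + 1 : Fin (m+1)) : ℕ) = (q:ℕ) + 1 := by
      rw [hval, if_neg q.isLt.ne]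
    have hp : ¬ (((⟨(p:ℕ), by have := p.isLt; omega⟩ : Fin (m+1)) : ℕ) = m) := by
      simp; omega
    rw [hTdef]
    simp only [Matrix.of_apply, if_neg hp, hN, hv]
    have hpair : ((⟨(p:ℕ), by have := p.isLt; omega⟩ : Fin (m+1)), a)
          = (((⟨(q:ℕ), by have := q.isLt; omega⟩ : Fin (m+1)) + 1 : Fin (m+1)), b)
        ↔ ((p:ℕ) = (q:ℕ) + 1 ∧ a = b) := by
      rw [Prod.ext_iff, Fin.ext_iff, hv]
    simp only [hpair, hEmdef, Matrix.kroneckerMap_apply, Matrix.of_apply,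
      Matrix.one_apply, Fin.ext_iff]
    split_ifs <;> first | ring1 | (exfalso; omega) | (exact absurd ‹False› not_false)
  have hWB : W.det = Em.det ^ 2 * B.det := by
    rw [← Matrix.fromBlocks_toBlocks W, h11, h21, h22, Matrix.det_fromBlocks_zero₂₁,
      Matrix.det_kronecker, Matrix.det_one, one_pow, Fintype.card_fin, mul_one]
  have : N.det = ((-1:S) ^ m) ^ 2 * B.det := by
    rw [← hTdet, ← hT2det, ← hWdet, hWB, hEmdet]
  rw [this, ← pow_mul, mul_comm m 2, pow_mul, neg_one_sq, one_pow, one_mul]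

/-- The characteristic polynomial of the `2n×2n` block-companion matrix with
first block column `A₁, …, Aₙ` and identity blocks on the block superdiagonal
equals `det(Xⁿ·I₂ - Σ X^{n-i}·Aᵢ)`. -/
theorem stmt_16 {R : Type*} [CommRing R] (n : ℕ) (hn : 1 ≤ n)
    (A : Fin n → Matrix (Fin 2) (Fin 2) R)
    (M : Matrix (Fin n × Fin 2) (Fin n × Fin 2) R)
    (hM : ∀ p q : Fin n × Fin 2,
      M p q = if (q.1 : ℕ) = 0 then A p.1 p.2 q.2
        else if (q.1 : ℕ) = (p.1 : ℕ) + 1 then (1 : Matrix (Fin 2) (Fin 2) R) p.2 q.2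
        else 0) :
    Matrix.det
        ((X : R[X]) • (1 : Matrix (Fin n × Fin 2) (Fin n × Fin 2) R[X]) - M.map C) =
      Matrix.det
        ((X ^ n : R[X]) • (1 : Matrix (Fin 2) (Fin 2) R[X]) -
          ∑ i : Fin n, (X ^ (n - 1 - (i : ℕ)) : R[X]) • (A i).map C) := by
  obtain ⟨m, rfl⟩ : ∃ m, n = m + 1 := ⟨n - 1, by omega⟩
  exact key m X (fun i => (A i).map C) _ (by
    intro p q
    simp [hM, Matrix.sub_apply, Matrix.smul_apply, Matrix.map_apply, Matrix.one_apply,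
      apply_ite C, smul_eq_mul])
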